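/- Let S(z) = sin(2πz) − sin(2π/z) for z ≠ 0, and let A = {z ∈ ℂ : 4/5 ≤ |z| ≤ 5/4}. Then S has exactly 10 zeros in A, counted with multiplicity. -/

import Mathlib

open Real Complex

/-- Factor out simple zeros of an entire function. -/
lemma factor_entire : ∀ (n : ℕ) (f : ℂ → ℂ), Differentiable ℂ f →
    ∀ (p : Fin n → ℂ), Function.Injective p → (∀ i, f (p i) = 0) →
    ∃ g : ℂ → ℂ, Differentiable ℂ g ∧ ∀ z, f z = (∏ i, (z - p i)) * g z := by
  intro n
  induction n with
  | zero => intro f hf p _ _; exact ⟨f, hf, fun z => by simp⟩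
  | succ n ih =>
    intro f hf p hinj hz
    set a := p 0 with ha
    have hfa : f a = 0 := hz 0
    have hfac : ∀ z, f z = (z - a) * dslope f a z := by
      intro z
      have := sub_smul_dslope f a z
      rw [smul_eq_mul] at this
      rw [this, hfa, sub_zero]
    have hd : Differentiable ℂ (dslope f a) := by
      rw [← differentiableOn_univ] at hf ⊢
      exact (Complex.differentiableOn_dslope Filter.univ_mem).2 hf
    obtain ⟨g, hg, hgfac⟩ := ih (dslope f a) hd (fun i => p i.succ)
      (fun i j hij => Fin.succ_injective _ (hinj hij))
      (by
        intro i
        have hne : p i.succ ≠ a := fun h => Fin.succ_ne_zero i (hinj h)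
        rw [dslope_of_ne f hne, slope_def_field, hz i.succ, hfa]
        simp)
    refine ⟨g, hg, fun z => ?_⟩
    rw [hfac z, hgfac z, Fin.prod_univ_succ]
    ring

/-- If `f z = (z - a) * g z` everywhere and `g` is continuous at `a`, then `deriv f a = g a`. -/
lemma deriv_of_factor (f g : ℂ → ℂ) (a : ℂ) (hg : ContinuousAt g a)
    (hfac : ∀ z, f z = (z - a) * g z) : deriv f a = g a := by
  have hfa : f a = 0 := by rw [hfac a]; ring
  have h1 : HasDerivAt f (g a) a := by
    rw [hasDerivAt_iff_tendsto_slope]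
    have h2 : Filter.Tendsto g (nhdsWithin a {a}ᶜ) (nhds (g a)) :=
      hg.continuousWithinAt.tendsto
    refine h2.congr' ?_
    filter_upwards [self_mem_nhdsWithin] with z hzne
    rw [slope_def_field, hfac z, hfa]
    field_simp [sub_ne_zero.2 (show z ≠ a from hzne)]; ring
  exact h1.deriv

lemma hasDerivAt_cos_pi_mul (a : ℂ) :
    HasDerivAt (fun w : ℂ => Complex.cos ((π : ℂ) * w)) (-Complex.sin ((π : ℂ) * a) * π) a := by
  have h1 : HasDerivAt (fun w : ℂ => (π : ℂ) * w) (π : ℂ) a := by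
    simpa using (hasDerivAt_id a).const_mul (π : ℂ)
  exact (Complex.hasDerivAt_cos ((π : ℂ) * a)).comp a h1

/-- Nonvanishing of the cofactor at one of the four roots. -/
lemma cos_cofactor_ne_zero (g : ℂ → ℂ) (hgc : Continuous g) (a b c d : ℂ)
    (hfac : ∀ w : ℂ, Complex.cos ((π : ℂ) * w) = (w - a) * (w - b) * (w - c) * (w - d) * g w)
    (hsin : Complex.sin ((π : ℂ) * a) ≠ 0) : g a ≠ 0 := by
  set G : ℂ → ℂ := fun z => (z - b) * (z - c) * (z - d) * g z with hG
  have hfacG : ∀ z, Complex.cos ((π : ℂ) * z) = (z - a) * G z := fun z => by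
    rw [hfac z, hG]; ring
  have hcont : ContinuousAt G a :=
    (((by continuity : Continuous fun z : ℂ => (z - b) * (z - c) * (z - d))).mul hgc).continuousAt
  have h1 : -Complex.sin ((π : ℂ) * a) * π = G a :=
    ((hasDerivAt_cos_pi_mul a).deriv).symm.trans
      (deriv_of_factor _ G a hcont hfacG)
  intro h0
  have h2 : -Complex.sin ((π : ℂ) * a) * π = 0 := by
    rw [h1, hG]; simp [h0]
  rcases mul_eq_zero.mp h2 with h3 | h3
  · exact hsin (neg_eq_zero.mp h3)
  · exact Real.pi_ne_zero (by exact_mod_cast h3)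

/-- The cosine factorization. -/
lemma cosFac : ∃ g : ℂ → ℂ, Differentiable ℂ g ∧
    (∀ w : ℂ, Complex.cos ((π : ℂ) * w)
      = (w - 1/2) * (w + 1/2) * (w - 3/2) * (w + 3/2) * g w) ∧
    (∀ w : ℂ, ‖w‖ ≤ 41/20 → g w ≠ 0) := by
  have hπ : (π : ℂ) ≠ 0 := Complex.ofReal_ne_zero.2 Real.pi_ne_zero
  set f : ℂ → ℂ := fun w => Complex.cos ((π : ℂ) * w) with hf
  have hdf : Differentiable ℂ f :=
    Complex.differentiable_cos.comp (differentiable_id.const_mul _)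
  set p : Fin 4 → ℂ := ![1/2, -1/2, 3/2, -3/2] with hp
  have hinj : Function.Injective p := by
    intro i j hij
    fin_cases i <;> fin_cases j <;> simp [hp] at hij ⊢ <;> norm_num at hij
  have hzero : ∀ i, f (p i) = 0 := by
    intro i
    fin_cases i
    · show Complex.cos ((π : ℂ) * (1/2)) = 0
      rw [show (π : ℂ) * (1/2) = (π : ℂ)/2 by ring, Complex.cos_pi_div_two]
    · show Complex.cos ((π : ℂ) * (-1/2)) = 0
      rw [show (π : ℂ) * (-1/2 : ℂ) = -((π : ℂ)/2) by ring, Complex.cos_neg,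
        Complex.cos_pi_div_two]
    · show Complex.cos ((π : ℂ) * (3/2)) = 0
      rw [show (π : ℂ) * (3/2 : ℂ) = (π : ℂ) + (π : ℂ)/2 by ring, Complex.cos_add,
        Complex.cos_pi_div_two, Complex.sin_pi]
      ring
    · show Complex.cos ((π : ℂ) * (-3/2)) = 0
      rw [show (π : ℂ) * (-3/2 : ℂ) = -((π : ℂ) + (π : ℂ)/2) by ring, Complex.cos_neg,
        Complex.cos_add, Complex.cos_pi_div_two, Complex.sin_pi]
      ring
  obtain ⟨g, hg, hgfac⟩ := factor_entire 4 f hdf p hinj hzero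
  have hfac : ∀ w : ℂ, Complex.cos ((π : ℂ) * w)
      = (w - 1/2) * (w + 1/2) * (w - 3/2) * (w + 3/2) * g w := by
    intro w
    have := hgfac w
    rw [Fin.prod_univ_four] at this
    simp only [hp, Matrix.cons_val_zero, Matrix.cons_val_one, Matrix.head_cons,
      Matrix.cons_val_two, Matrix.tail_cons, Matrix.cons_val_three] at this
    rw [show (w - (-1/2 : ℂ)) = w + 1/2 by ring, show (w - (-3/2 : ℂ)) = w + 3/2 by ring] at this
    exact this
  refine ⟨g, hg, hfac, ?_⟩
  -- nonvanishing at the four points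
  have h12 : g (1/2) ≠ 0 := by
    apply cos_cofactor_ne_zero g hg.continuous (1/2) (-1/2) (3/2) (-3/2)
      (fun w => by rw [hfac w]; ring)
    rw [show (π : ℂ) * (1/2 : ℂ) = (π : ℂ)/2 by ring, Complex.sin_pi_div_two]
    norm_num
  have hm12 : g (-1/2) ≠ 0 := by
    apply cos_cofactor_ne_zero g hg.continuous (-1/2) (1/2) (3/2) (-3/2)
      (fun w => by rw [hfac w]; ring)
    rw [show (π : ℂ) * (-1/2 : ℂ) = -((π : ℂ)/2) by ring, Complex.sin_neg,
      Complex.sin_pi_div_two]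
    norm_num
  have h32 : g (3/2) ≠ 0 := by
    apply cos_cofactor_ne_zero g hg.continuous (3/2) (1/2) (-1/2) (-3/2)
      (fun w => by rw [hfac w]; ring)
    rw [show (π : ℂ) * (3/2 : ℂ) = (π : ℂ) + (π : ℂ)/2 by ring, Complex.sin_add,
      Complex.sin_pi, Complex.cos_pi, Complex.sin_pi_div_two]
    norm_num
  have hm32 : g (-3/2) ≠ 0 := by
    apply cos_cofactor_ne_zero g hg.continuous (-3/2) (1/2) (-1/2) (3/2)
      (fun w => by rw [hfac w]; ring)
    rw [show (π : ℂ) * (-3/2 : ℂ) = -((π : ℂ) + (π : ℂ)/2) by ring, Complex.sin_neg,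
      Complex.sin_add, Complex.sin_pi, Complex.cos_pi, Complex.sin_pi_div_two]
    norm_num
  intro w hw h0
  have hcos : Complex.cos ((π : ℂ) * w) = 0 := by rw [hfac w, h0]; ring
  rw [Complex.cos_eq_zero_iff] at hcos
  obtain ⟨k, hk⟩ := hcos
  have hw2 : w = (2 * (k : ℂ) + 1)/2 :=
    mul_left_cancel₀ hπ (hk.trans (by ring))
  have habs : ‖w‖ = |2 * (k : ℝ) + 1| / 2 := by
    rw [hw2, show ((2 * (k : ℂ) + 1) : ℂ) = (((2 * (k : ℝ) + 1) : ℝ) : ℂ) by push_cast; ring,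
      norm_div, Complex.norm_real, Real.norm_eq_abs]
    norm_num
  rw [habs] at hw
  have hk1 : |2 * (k : ℝ) + 1| ≤ 41/10 := by linarith
  rw [abs_le] at hk1
  have hk2 : (-3 : ℤ) < k := by
    exact_mod_cast (show ((-3 : ℤ) : ℝ) < (k : ℝ) by push_cast; linarith [hk1.1])
  have hk3 : k < (2 : ℤ) := by
    exact_mod_cast (show ((k : ℤ) : ℝ) < ((2 : ℤ) : ℝ) by push_cast; linarith [hk1.2])
  interval_cases k
  · have hwv : w = -3/2 := by rw [hw2]; norm_num
    rw [hwv] at h0; exact hm32 h0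
  · have hwv : w = -1/2 := by rw [hw2]; norm_num
    rw [hwv] at h0; exact hm12 h0
  · have hwv : w = 1/2 := by rw [hw2]; norm_num
    rw [hwv] at h0; exact h12 h0
  · have hwv : w = 3/2 := by rw [hw2]; norm_num
    rw [hwv] at h0; exact h32 h0

/-- The sine factorization at 0. -/
lemma sinFac : ∃ s : ℂ → ℂ, Differentiable ℂ s ∧
    (∀ u : ℂ, Complex.sin ((π : ℂ) * u) = u * s u) ∧ s 0 ≠ 0 := by
  set f : ℂ → ℂ := fun u => Complex.sin ((π : ℂ) * u) with hf
  have hdf : Differentiable ℂ f :=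
    Complex.differentiable_sin.comp (differentiable_id.const_mul _)
  have hf0 : f 0 = 0 := by simp [hf]
  refine ⟨dslope f 0, ?_, ?_, ?_⟩
  · rw [← differentiableOn_univ]
    exact (Complex.differentiableOn_dslope Filter.univ_mem).2 hdf.differentiableOn
  · intro u
    have := sub_smul_dslope f 0 u
    rw [smul_eq_mul, hf0, sub_zero, sub_zero] at this
    exact this.symm
  · rw [dslope_same]
    have h1 : HasDerivAt (fun w : ℂ => (π : ℂ) * w) (π : ℂ) 0 := by
      simpa using (hasDerivAt_id (0:ℂ)).const_mul (π : ℂ)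
    have h2 : HasDerivAt f ((π : ℂ)) 0 := by
      have := (Complex.hasDerivAt_sin ((π : ℂ) * 0)).comp 0 h1
      rw [mul_zero, Complex.cos_zero, one_mul] at this
      exact this
    rw [h2.deriv]
    exact Complex.ofReal_ne_zero.2 Real.pi_ne_zero

/-- No point of the annulus satisfies `z^2 - (a+b) z - 1 = 0` when the real roots
`a, b` are outside the annulus. -/
lemma quad_excl (z : ℂ) (h1 : 4/5 ≤ ‖z‖) (h2 : ‖z‖ ≤ 5/4) (a b : ℝ)
    (hprod : a * b = -1) (ha : 5/4 < |a|) (hb : |b| < 4/5)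
    (heq : z * z - ((a : ℂ) + (b : ℂ)) * z - 1 = 0) : False := by
  have hab : (a : ℂ) * (b : ℂ) = -1 := by
    rw [← Complex.ofReal_mul, hprod]; norm_num
  have hfac : (z - (a : ℂ)) * (z - (b : ℂ)) = 0 := by
    linear_combination heq + hab
  rcases mul_eq_zero.mp hfac with h | h
  · have hz : z = (a : ℂ) := sub_eq_zero.mp h
    rw [hz, Complex.norm_real, Real.norm_eq_abs] at h2
    linarith
  · have hz : z = (b : ℂ) := sub_eq_zero.mp h
    rw [hz, Complex.norm_real, Real.norm_eq_abs] at h1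
    linarith

/-- Bound `|z + c| ≤ 41/20` on the annulus when `|c| = |z|⁻¹`. -/
lemma annulus_bound (z c : ℂ) (h1 : 4/5 ≤ ‖z‖) (h2 : ‖z‖ ≤ 5/4)
    (hc : ‖c‖ = (‖z‖)⁻¹) : ‖z + c‖ ≤ 41/20 := by
  set t := ‖z‖ with htdef
  have ht : 0 < t := lt_of_lt_of_le (by norm_num) h1
  have h3 : ‖z + c‖ ≤ t + t⁻¹ := by
    calc ‖z + c‖ ≤ ‖z‖ + ‖c‖ := norm_add_le z c
    _ = t + t⁻¹ := by rw [hc]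
  have h4 : t * t⁻¹ = 1 := mul_inv_cancel₀ ht.ne'
  have h5 : t + t⁻¹ ≤ 41/20 := by
    nlinarith [mul_nonneg (by linarith : (0:ℝ) ≤ 5 - 4*t) (by linarith : (0:ℝ) ≤ 5*t - 4)]
  linarith

/-- If `z` is in the annulus and `z - 1/z` is an integer, that integer is `0`. -/
lemma sin_arg_int_zero (z : ℂ) (h1 : 4/5 ≤ ‖z‖) (h2 : ‖z‖ ≤ 5/4)
    (hz : z ≠ 0) (k : ℤ) (hk : z - 1/z = (k : ℂ)) : k = 0 := by
  have habs : ‖z - 1/z‖ ≤ 41/20 := by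
    have := annulus_bound z (-(1/z)) h1 h2 (by rw [norm_neg, one_div, norm_inv])
    simpa [sub_eq_add_neg] using this
  rw [hk, Complex.norm_intCast] at habs
  have hb1 : (-3 : ℤ) < k := by
    exact_mod_cast (show ((-3 : ℤ) : ℝ) < (k : ℝ) by
      push_cast; cases abs_le.mp habs; linarith)
  have hb2 : k < (3 : ℤ) := by
    exact_mod_cast (show ((k : ℤ) : ℝ) < ((3 : ℤ) : ℝ) by
      push_cast; cases abs_le.mp habs; linarith)
  have hz1 : z * (1/z) = 1 := by field_simp
  have heq : z * z - (k : ℂ) * z - 1 = 0 := by linear_combination z * hk + hz1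
  have h5 : Real.sqrt 5 ^ 2 = 5 := Real.sq_sqrt (by norm_num)
  have h5n : (0:ℝ) ≤ Real.sqrt 5 := Real.sqrt_nonneg 5
  have h5l : 2 < Real.sqrt 5 := by nlinarith
  have h5u : Real.sqrt 5 < 13/5 := by nlinarith
  have h2' : Real.sqrt 2 ^ 2 = 2 := Real.sq_sqrt (by norm_num)
  have h2n : (0:ℝ) ≤ Real.sqrt 2 := Real.sqrt_nonneg 2
  have h2l : 1 < Real.sqrt 2 := by nlinarith
  have h2u : Real.sqrt 2 < 9/5 := by nlinarith
  interval_cases k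
  · -- k = -2 : roots -1-√2, -1+√2
    exfalso
    refine quad_excl z h1 h2 (-1 - Real.sqrt 2) (-1 + Real.sqrt 2) (by nlinarith)
      (by rw [abs_of_neg (by linarith)]; linarith)
      (by rw [abs_of_pos (by linarith)]; linarith) ?_
    have hsum : ((-1 - Real.sqrt 2 : ℝ) : ℂ) + ((-1 + Real.sqrt 2 : ℝ) : ℂ) = ((-2 : ℤ) : ℂ) := by
      push_cast; ring
    rw [hsum]; exact heq
  · -- k = -1 : roots (-1-√5)/2, (-1+√5)/2
    exfalso
    refine quad_excl z h1 h2 ((-1 - Real.sqrt 5)/2) ((-1 + Real.sqrt 5)/2) (by nlinarith)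
      (by rw [abs_of_neg (by linarith)]; linarith)
      (by rw [abs_of_pos (by linarith)]; linarith) ?_
    have hsum : (((-1 - Real.sqrt 5)/2 : ℝ) : ℂ) + (((-1 + Real.sqrt 5)/2 : ℝ) : ℂ)
        = ((-1 : ℤ) : ℂ) := by push_cast; ring
    rw [hsum]; exact heq
  · rfl
  · -- k = 1 : roots (1+√5)/2, (1-√5)/2
    exfalso
    refine quad_excl z h1 h2 ((1 + Real.sqrt 5)/2) ((1 - Real.sqrt 5)/2) (by nlinarith)
      (by rw [abs_of_pos (by linarith)]; linarith)
      (by rw [abs_of_neg (by linarith)]; linarith) ?_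
    have hsum : (((1 + Real.sqrt 5)/2 : ℝ) : ℂ) + (((1 - Real.sqrt 5)/2 : ℝ) : ℂ)
        = ((1 : ℤ) : ℂ) := by push_cast; ring
    rw [hsum]; exact heq
  · -- k = 2 : roots 1+√2, 1-√2
    exfalso
    refine quad_excl z h1 h2 (1 + Real.sqrt 2) (1 - Real.sqrt 2) (by nlinarith)
      (by rw [abs_of_pos (by linarith)]; linarith)
      (by rw [abs_of_neg (by linarith)]; linarith) ?_
    have hsum : ((1 + Real.sqrt 2 : ℝ) : ℂ) + ((1 - Real.sqrt 2 : ℝ) : ℂ) = ((2 : ℤ) : ℂ) := by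
      push_cast; ring
    rw [hsum]; exact heq

lemma abs_helper (a b : ℝ) (h : a^2 + b^2 = 16) :
    ‖((a : ℂ) + (b : ℂ) * I)/4‖ = 1 := by
  have h1 : ‖(a : ℂ) + (b : ℂ) * I‖^2 = 16 := by
    rw [Complex.sq_norm, Complex.normSq_add_mul_I, h]
  have hnn : 0 ≤ ‖(a : ℂ) + (b : ℂ) * I‖ := norm_nonneg _
  have h2 : ‖(a : ℂ) + (b : ℂ) * I‖ = 4 := by nlinarith
  rw [norm_div, h2]
  norm_num

set_option maxHeartbeats 1000000 in
theorem S_has_exactly_ten_zeros_in_annulus :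
    ∃ (zs : Fin 10 → ℂ) (h : ℂ → ℂ),
      (∀ i, zs i ∈ {z : ℂ | 4 / 5 ≤ ‖z‖ ∧ ‖z‖ ≤ 5 / 4}) ∧
      DifferentiableOn ℂ h {(0 : ℂ)}ᶜ ∧
      (∀ z ∈ {z : ℂ | 4 / 5 ≤ ‖z‖ ∧ ‖z‖ ≤ 5 / 4}, h z ≠ 0) ∧
      (∀ z : ℂ, z ≠ 0 →
        Complex.sin (2 * π * z) - Complex.sin (2 * π / z)
          = (∏ i, (z - zs i)) * h z) := by
  obtain ⟨s, hs, hsid, hs0⟩ := sinFac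
  obtain ⟨g, hg, hgid, hgnv⟩ := cosFac
  have hr15 : Real.sqrt 15 ^ 2 = 15 := Real.sq_sqrt (by norm_num)
  have hr7 : Real.sqrt 7 ^ 2 = 7 := Real.sq_sqrt (by norm_num)
  have h15 : ((Real.sqrt 15 : ℝ) : ℂ) ^ 2 = 15 := by
    rw [← Complex.ofReal_pow, hr15]; norm_num
  have h7 : ((Real.sqrt 7 : ℝ) : ℂ) ^ 2 = 7 := by
    rw [← Complex.ofReal_pow, hr7]; norm_num
  refine ⟨![1, -1,
      (1 + (Real.sqrt 15 : ℝ) * I)/4, (1 - (Real.sqrt 15 : ℝ) * I)/4,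
      (-1 + (Real.sqrt 15 : ℝ) * I)/4, (-1 - (Real.sqrt 15 : ℝ) * I)/4,
      (3 + (Real.sqrt 7 : ℝ) * I)/4, (3 - (Real.sqrt 7 : ℝ) * I)/4,
      (-3 + (Real.sqrt 7 : ℝ) * I)/4, (-3 - (Real.sqrt 7 : ℝ) * I)/4],
    fun z => 2 * s (z - 1/z) * g (z + 1/z) / z^5, ?_, ?_, ?_, ?_⟩
  · -- membership of the ten zeros
    intro i
    simp only [Set.mem_setOf_eq]
    have key : ∀ X : ℂ, ‖X‖ = 1 → 4/5 ≤ ‖X‖ ∧ ‖X‖ ≤ 5/4 := by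
      intro X hX; rw [hX]; norm_num
    fin_cases i
    · exact key 1 (by simp)
    · exact key (-1) (by simp)
    · refine key _ ?_
      show ‖(1 + (Real.sqrt 15 : ℝ) * I)/4‖ = 1
      rw [show ((1 + (Real.sqrt 15 : ℝ) * I)/4 : ℂ)
        = (((1:ℝ):ℂ) + ((Real.sqrt 15 : ℝ):ℂ) * I)/4 by push_cast; ring]
      exact abs_helper 1 (Real.sqrt 15) (by nlinarith)
    · refine key _ ?_
      show ‖(1 - (Real.sqrt 15 : ℝ) * I)/4‖ = 1
      rw [show ((1 - (Real.sqrt 15 : ℝ) * I)/4 : ℂ)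
        = (((1:ℝ):ℂ) + ((-Real.sqrt 15 : ℝ):ℂ) * I)/4 by push_cast; ring]
      exact abs_helper 1 (-Real.sqrt 15) (by nlinarith)
    · refine key _ ?_
      show ‖(-1 + (Real.sqrt 15 : ℝ) * I)/4‖ = 1
      rw [show ((-1 + (Real.sqrt 15 : ℝ) * I)/4 : ℂ)
        = (((-1:ℝ):ℂ) + ((Real.sqrt 15 : ℝ):ℂ) * I)/4 by push_cast; ring]
      exact abs_helper (-1) (Real.sqrt 15) (by nlinarith)
    · refine key _ ?_
      show ‖(-1 - (Real.sqrt 15 : ℝ) * I)/4‖ = 1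
      rw [show ((-1 - (Real.sqrt 15 : ℝ) * I)/4 : ℂ)
        = (((-1:ℝ):ℂ) + ((-Real.sqrt 15 : ℝ):ℂ) * I)/4 by push_cast; ring]
      exact abs_helper (-1) (-Real.sqrt 15) (by nlinarith)
    · refine key _ ?_
      show ‖(3 + (Real.sqrt 7 : ℝ) * I)/4‖ = 1
      rw [show ((3 + (Real.sqrt 7 : ℝ) * I)/4 : ℂ)
        = (((3:ℝ):ℂ) + ((Real.sqrt 7 : ℝ):ℂ) * I)/4 by push_cast; ring]
      exact abs_helper 3 (Real.sqrt 7) (by nlinarith)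
    · refine key _ ?_
      show ‖(3 - (Real.sqrt 7 : ℝ) * I)/4‖ = 1
      rw [show ((3 - (Real.sqrt 7 : ℝ) * I)/4 : ℂ)
        = (((3:ℝ):ℂ) + ((-Real.sqrt 7 : ℝ):ℂ) * I)/4 by push_cast; ring]
      exact abs_helper 3 (-Real.sqrt 7) (by nlinarith)
    · refine key _ ?_
      show ‖(-3 + (Real.sqrt 7 : ℝ) * I)/4‖ = 1
      rw [show ((-3 + (Real.sqrt 7 : ℝ) * I)/4 : ℂ)
        = (((-3:ℝ):ℂ) + ((Real.sqrt 7 : ℝ):ℂ) * I)/4 by push_cast; ring]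
      exact abs_helper (-3) (Real.sqrt 7) (by nlinarith)
    · refine key _ ?_
      show ‖(-3 - (Real.sqrt 7 : ℝ) * I)/4‖ = 1
      rw [show ((-3 - (Real.sqrt 7 : ℝ) * I)/4 : ℂ)
        = (((-3:ℝ):ℂ) + ((-Real.sqrt 7 : ℝ):ℂ) * I)/4 by push_cast; ring]
      exact abs_helper (-3) (-Real.sqrt 7) (by nlinarith)
  · -- differentiability on ℂ \ {0}
    intro z hz
    have hz0 : z ≠ 0 := hz
    apply DifferentiableAt.differentiableWithinAt
    have h1 : DifferentiableAt ℂ (fun z : ℂ => z - 1/z) z :=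
      differentiableAt_id.sub ((differentiableAt_const 1).div differentiableAt_id hz0)
    have h2 : DifferentiableAt ℂ (fun z : ℂ => z + 1/z) z :=
      differentiableAt_id.add ((differentiableAt_const 1).div differentiableAt_id hz0)
    exact (((hs.differentiableAt.comp z h1).const_mul 2).mul
      (hg.differentiableAt.comp z h2)).div (differentiableAt_pow 5) (pow_ne_zero 5 hz0)
  · -- nonvanishing on the annulus
    rintro z ⟨hz1, hz2⟩
    have hz0 : z ≠ 0 := by
      intro h; rw [h] at hz1; simp at hz1; linarith
    have hgne : g (z + 1/z) ≠ 0 :=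
      hgnv _ (annulus_bound z (1/z) hz1 hz2 (by rw [one_div, norm_inv]))
    have hsne : s (z - 1/z) ≠ 0 := by
      by_cases hu : z - 1/z = 0
      · rw [hu]; exact hs0
      · intro h0
        have hsin0 : Complex.sin ((π:ℂ) * (z - 1/z)) = 0 := by
          rw [hsid, h0, mul_zero]
        rw [Complex.sin_eq_zero_iff] at hsin0
        obtain ⟨k, hk⟩ := hsin0
        have hπ : (π : ℂ) ≠ 0 := Complex.ofReal_ne_zero.2 Real.pi_ne_zero
        have hu2 : z - 1/z = (k : ℂ) := by
          apply mul_right_cancel₀ hπ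
          rw [mul_comm (z - 1/z) ((π:ℂ))]
          exact hk
        have := sin_arg_int_zero z hz1 hz2 hz0 k hu2
        rw [this] at hu2
        exact hu (by simpa using hu2)
    exact div_ne_zero (mul_ne_zero (mul_ne_zero two_ne_zero hsne) hgne)
      (pow_ne_zero 5 hz0)
  · -- the factorization identity
    intro z hz0
    have e1 : (2 * (π:ℂ) * z - 2 * (π:ℂ) / z)/2 = (π:ℂ) * (z - 1/z) := by ring
    have e2 : (2 * (π:ℂ) * z + 2 * (π:ℂ) / z)/2 = (π:ℂ) * (z + 1/z) := by ring
    have q1 : (z - (1 + (Real.sqrt 15 : ℝ) * I)/4) * (z - (1 - (Real.sqrt 15 : ℝ) * I)/4)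
        = z^2 - z/2 + 1 := by
      linear_combination (-(Complex.I^2)/16) * h15 + (-(15:ℂ)/16) * Complex.I_sq
    have q2 : (z - (-1 + (Real.sqrt 15 : ℝ) * I)/4) * (z - (-1 - (Real.sqrt 15 : ℝ) * I)/4)
        = z^2 + z/2 + 1 := by
      linear_combination (-(Complex.I^2)/16) * h15 + (-(15:ℂ)/16) * Complex.I_sq
    have q3 : (z - (3 + (Real.sqrt 7 : ℝ) * I)/4) * (z - (3 - (Real.sqrt 7 : ℝ) * I)/4)
        = z^2 - 3*z/2 + 1 := by
      linear_combination (-(Complex.I^2)/16) * h7 + (-(7:ℂ)/16) * Complex.I_sq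
    have q4 : (z - (-3 + (Real.sqrt 7 : ℝ) * I)/4) * (z - (-3 - (Real.sqrt 7 : ℝ) * I)/4)
        = z^2 + 3*z/2 + 1 := by
      linear_combination (-(Complex.I^2)/16) * h7 + (-(7:ℂ)/16) * Complex.I_sq
    have hprod10 : (∏ i, (z - ![1, -1,
          (1 + (Real.sqrt 15 : ℝ) * I)/4, (1 - (Real.sqrt 15 : ℝ) * I)/4,
          (-1 + (Real.sqrt 15 : ℝ) * I)/4, (-1 - (Real.sqrt 15 : ℝ) * I)/4,
          (3 + (Real.sqrt 7 : ℝ) * I)/4, (3 - (Real.sqrt 7 : ℝ) * I)/4,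
          (-3 + (Real.sqrt 7 : ℝ) * I)/4, (-3 - (Real.sqrt 7 : ℝ) * I)/4] i))
        = (z - 1) * (z + 1) * (z^2 - z/2 + 1) * (z^2 + z/2 + 1)
          * (z^2 - 3*z/2 + 1) * (z^2 + 3*z/2 + 1) := by
      rw [show (z - 1) * (z + 1) * (z^2 - z/2 + 1) * (z^2 + z/2 + 1)
          * (z^2 - 3*z/2 + 1) * (z^2 + 3*z/2 + 1)
        = (z - 1) * (z + 1)
          * ((z - (1 + (Real.sqrt 15 : ℝ) * I)/4) * (z - (1 - (Real.sqrt 15 : ℝ) * I)/4))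
          * ((z - (-1 + (Real.sqrt 15 : ℝ) * I)/4) * (z - (-1 - (Real.sqrt 15 : ℝ) * I)/4))
          * ((z - (3 + (Real.sqrt 7 : ℝ) * I)/4) * (z - (3 - (Real.sqrt 7 : ℝ) * I)/4))
          * ((z - (-3 + (Real.sqrt 7 : ℝ) * I)/4) * (z - (-3 - (Real.sqrt 7 : ℝ) * I)/4))
        by rw [q1, q2, q3, q4]]
      simp only [Fin.prod_univ_succ, Fin.prod_univ_zero, Matrix.cons_val_zero,
        Matrix.cons_val_succ, mul_one]
      ring
    rw [Complex.sin_sub_sin, e1, e2, hsid (z - 1/z), hgid (z + 1/z), hprod10]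
    have hz5 : z^5 ≠ 0 := pow_ne_zero 5 hz0
    have hkey : (z - 1) * (z + 1) * (z^2 - z/2 + 1) * (z^2 + z/2 + 1)
          * (z^2 - 3*z/2 + 1) * (z^2 + 3*z/2 + 1)
        = ((z - 1/z) * (((z + 1/z) - 1/2) * (((z + 1/z) + 1/2)
            * (((z + 1/z) - 3/2) * ((z + 1/z) + 3/2))))) * z^5 := by
      have a1 : (z - 1/z) * z = z^2 - 1 := by field_simp
      have a2 : ((z + 1/z) - 1/2) * z = z^2 - z/2 + 1 := by field_simp; ring
      have a3 : ((z + 1/z) + 1/2) * z = z^2 + z/2 + 1 := by field_simp; ring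
      have a4 : ((z + 1/z) - 3/2) * z = z^2 - 3*z/2 + 1 := by field_simp; ring
      have a5 : ((z + 1/z) + 3/2) * z = z^2 + 3*z/2 + 1 := by field_simp; ring
      calc (z - 1) * (z + 1) * (z^2 - z/2 + 1) * (z^2 + z/2 + 1)
          * (z^2 - 3*z/2 + 1) * (z^2 + 3*z/2 + 1)
          = ((z - 1/z) * z) * ((((z + 1/z) - 1/2) * z) * ((((z + 1/z) + 1/2) * z)
            * ((((z + 1/z) - 3/2) * z) * (((z + 1/z) + 3/2) * z)))) := by
            rw [a1, a2, a3, a4, a5]; ring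
        _ = _ := by ring
    rw [hkey]
    have h5 : (z^5) * (z^5)⁻¹ = 1 := mul_inv_cancel₀ hz5
    linear_combination (-((z - 1/z) * (((z + 1/z) - 1/2) * (((z + 1/z) + 1/2)
      * (((z + 1/z) - 3/2) * ((z + 1/z) + 3/2)))) * (2 * s (z - 1/z) * g (z + 1/z)))) * h5
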